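/- Let D₁, D₃ > 0 and D₄ ∈ ℂ with |D₄| < D₁, and suppose |D₂|² < D₃(D₁ - |D₄|). Then the function CRLB₁(|D₂|²) = D₃(D₁D₃ - |D₂|²) / (|D₂|⁴ - 2D₁D₃|D₂|² + D₁²D₃² - |D₄|²D₃²) is strictly increasing in |D₂|² on this range, hence minimized at |D₂|² = 0, where it equals D₁/(D₁² - |D₄|²). -/

import Mathlib

theorem stmt_10 (D₁ D₃ : ℝ) (D₄ : ℂ) (hD₁ : 0 < D₁) (hD₃ : 0 < D₃)
    (hD₄ : ‖D₄‖ < D₁)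
    (CRLB₁ : ℝ → ℝ)
    (hC : ∀ t, CRLB₁ t = D₃*(D₁*D₃ - t) /
      (t^2 - 2*D₁*D₃*t + D₁^2*D₃^2 - (‖D₄‖)^2*D₃^2)) :
    StrictMonoOn CRLB₁ (Set.Ico 0 (D₃*(D₁ - ‖D₄‖))) ∧
    CRLB₁ 0 = D₁/(D₁^2 - (‖D₄‖)^2) ∧
    (∀ t ∈ Set.Ico (0:ℝ) (D₃*(D₁ - ‖D₄‖)), CRLB₁ 0 ≤ CRLB₁ t) := by
  set a := ‖D₄‖ with ha
  have ha0 : 0 ≤ a := norm_nonneg D₄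
  have hden : ∀ t ∈ Set.Ico (0:ℝ) (D₃*(D₁ - a)),
      0 < t^2 - 2*D₁*D₃*t + D₁^2*D₃^2 - a^2*D₃^2 := by
    intro t ht
    obtain ⟨ht0, htu⟩ := ht
    have h1 : a*D₃ < D₁*D₃ - t := by nlinarith
    nlinarith [mul_nonneg ha0 hD₃.le]
  have hmono : StrictMonoOn CRLB₁ (Set.Ico 0 (D₃*(D₁ - a))) := by
    intro x hx y hy hxy
    have hdx := hden x hx
    have hdy := hden y hy
    rw [hC x, hC y, div_lt_div_iff₀ hdx hdy]
    have h1 : a*D₃ < D₁*D₃ - y := by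
      obtain ⟨hy0, hyu⟩ := hy; nlinarith
    have h2 : a*D₃ < D₁*D₃ - x := by
      obtain ⟨hx0, hxu⟩ := hx; nlinarith
    have hux : 0 < D₁*D₃ - x := lt_of_le_of_lt (mul_nonneg ha0 hD₃.le) h2
    have huy : 0 < D₁*D₃ - y := lt_of_le_of_lt (mul_nonneg ha0 hD₃.le) h1
    nlinarith [mul_pos (mul_pos hD₃ (sub_pos.2 hxy))
      (add_pos_of_pos_of_nonneg (mul_pos hux huy)
        (mul_nonneg (mul_nonneg ha0 ha0) (mul_pos hD₃ hD₃).le))]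
  refine ⟨hmono, ?_, ?_⟩
  · have hne : D₁^2 - a^2 ≠ 0 := ne_of_gt (by nlinarith)
    have hd0 : (0:ℝ)^2 - 2*D₁*D₃*0 + D₁^2*D₃^2 - a^2*D₃^2 ≠ 0 :=
      ne_of_gt (hden 0 ⟨le_refl 0, by nlinarith⟩)
    rw [hC 0, div_eq_div_iff hd0 hne]
    ring
  · intro t ht
    rcases eq_or_lt_of_le ht.1 with h | h
    · rw [← h]
    · exact (hmono ⟨le_refl 0, lt_of_le_of_lt ht.1 ht.2⟩ ht h).le
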